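/- Let n, m ≥ 2. An (nm)×(nm) real matrix W commutes with G ⊗ H for every n×n permutation matrix G and every m×m permutation matrix H if and only if W is a linear combination of the four matrices I_n ⊗ I_m, I_n ⊗ J_m, J_n ⊗ I_m, J_n ⊗ J_m; moreover these four matrices are linearly independent, so the commutant has dimension exactly 4. -/
import Mathlib


open Matrix Kronecker

def allOnes (k : ℕ) : Matrix (Fin k) (Fin k) ℝ := Matrix.of fun _ _ => 1

/-- The space of (nm)×(nm) real matrices commuting with `G ⊗ H` for all
permutation matrices `G` (n×n) and `H` (m×m). -/
def kronPermCommutant (n m : ℕ) :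
    Submodule ℝ (Matrix (Fin n × Fin m) (Fin n × Fin m) ℝ) where
  carrier := {W | ∀ (σ : Equiv.Perm (Fin n)) (τ : Equiv.Perm (Fin m)),
    W * ((σ.permMatrix ℝ) ⊗ₖ (τ.permMatrix ℝ)) =
      ((σ.permMatrix ℝ) ⊗ₖ (τ.permMatrix ℝ)) * W}
  add_mem' := by
    intro W V hW hV σ τ
    rw [add_mul, mul_add, hW σ τ, hV σ τ]
  zero_mem' := by intro σ τ; rw [zero_mul, mul_zero]
  smul_mem' := by
    intro c W hW σ τ
    rw [smul_mul_assoc, mul_smul_comm, hW σ τ]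

lemma kron_perm_eq {n m : ℕ} (σ : Equiv.Perm (Fin n)) (τ : Equiv.Perm (Fin m)) :
    (σ.permMatrix ℝ) ⊗ₖ (τ.permMatrix ℝ) =
      (Equiv.prodCongr σ τ).toPEquiv.toMatrix := by
  ext ⟨i, j⟩ ⟨k, l⟩
  simp only [Equiv.Perm.permMatrix, PEquiv.toMatrix_apply, Equiv.toPEquiv_apply,
    kroneckerMap_apply, Option.mem_def, Option.some.injEq, Equiv.prodCongr_apply,
    Prod.map, Prod.mk.injEq]
  by_cases h1 : σ i = k <;> by_cases h2 : τ j = l <;> simp [h1, h2]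

lemma comm_perm_iff {ι : Type*} [Fintype ι] [DecidableEq ι] (e : Equiv.Perm ι)
    (W : Matrix ι ι ℝ) :
    W * e.toPEquiv.toMatrix = e.toPEquiv.toMatrix * W ↔ ∀ p q, W (e p) (e q) = W p q := by
  rw [PEquiv.mul_toMatrix_toPEquiv, PEquiv.toMatrix_toPEquiv_mul]
  constructor
  · intro h p q
    have := congrFun (congrFun h p) (e q)
    simpa using this.symm
  · intro h
    ext p q
    simp only [submatrix_apply, id]
    rw [← h p (e.symm q), Equiv.apply_symm_apply]

lemma exists_perm_two {α : Type*} [DecidableEq α] {x y a b : α}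
    (hxy : x ≠ y) (hab : a ≠ b) : ∃ σ : Equiv.Perm α, σ x = a ∧ σ y = b := by
  set σ₁ := Equiv.swap x a
  set y₁ := σ₁ y
  have hy₁ : y₁ ≠ a := by
    intro h
    have h2 : σ₁ y = σ₁ x := by
      show y₁ = σ₁ x
      rw [h]; simp [σ₁]
    exact hxy (σ₁.injective h2).symm
  refine ⟨σ₁.trans (Equiv.swap y₁ b), ?_, ?_⟩
  · simp [σ₁, Equiv.swap_apply_of_ne_of_ne hy₁.symm hab]
  · simp [σ₁, y₁]

lemma allOnes_mul_perm {k : ℕ} (σ : Equiv.Perm (Fin k)) :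
    allOnes k * σ.toPEquiv.toMatrix = allOnes k := by
  rw [PEquiv.mul_toMatrix_toPEquiv]; rfl

lemma perm_mul_allOnes {k : ℕ} (σ : Equiv.Perm (Fin k)) :
    σ.toPEquiv.toMatrix * allOnes k = allOnes k := by
  rw [PEquiv.toMatrix_toPEquiv_mul]; rfl

/-- Each of the four generators commutes with all `G ⊗ H`. -/
lemma generators_mem (n m : ℕ) :
    ((1 : Matrix (Fin n) (Fin n) ℝ) ⊗ₖ (1 : Matrix (Fin m) (Fin m) ℝ)
        ∈ kronPermCommutant n m) ∧
    ((1 : Matrix (Fin n) (Fin n) ℝ) ⊗ₖ allOnes m ∈ kronPermCommutant n m) ∧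
    (allOnes n ⊗ₖ (1 : Matrix (Fin m) (Fin m) ℝ) ∈ kronPermCommutant n m) ∧
    (allOnes n ⊗ₖ allOnes m ∈ kronPermCommutant n m) := by
  refine ⟨fun σ τ => ?_, fun σ τ => ?_, fun σ τ => ?_, fun σ τ => ?_⟩ <;>
  · show _ = _
    rw [Equiv.Perm.permMatrix, Equiv.Perm.permMatrix, ← Matrix.mul_kronecker_mul,
      ← Matrix.mul_kronecker_mul]
    congr 1 <;>
      simp [allOnes_mul_perm, perm_mul_allOnes]

lemma commutant_iff_span {n m : ℕ} (hn : 2 ≤ n) (hm : 2 ≤ m)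
    (W : Matrix (Fin n × Fin m) (Fin n × Fin m) ℝ) :
    (∀ (σ : Equiv.Perm (Fin n)) (τ : Equiv.Perm (Fin m)),
        W * ((σ.permMatrix ℝ) ⊗ₖ (τ.permMatrix ℝ)) =
          ((σ.permMatrix ℝ) ⊗ₖ (τ.permMatrix ℝ)) * W) ↔
      W ∈ Submodule.span ℝ
        {(1 : Matrix (Fin n) (Fin n) ℝ) ⊗ₖ (1 : Matrix (Fin m) (Fin m) ℝ),
         (1 : Matrix (Fin n) (Fin n) ℝ) ⊗ₖ allOnes m,
         allOnes n ⊗ₖ (1 : Matrix (Fin m) (Fin m) ℝ),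
         allOnes n ⊗ₖ allOnes m} := by
  constructor
  · intro h
    have inv : ∀ (σ : Equiv.Perm (Fin n)) (τ : Equiv.Perm (Fin m)) i j k l,
        W (σ i, τ j) (σ k, τ l) = W (i, j) (k, l) := by
      intro σ τ i j k l
      have := (comm_perm_iff (Equiv.prodCongr σ τ) W).mp
        (by rw [← kron_perm_eq]; exact h σ τ) (i, j) (k, l)
      simpa using this
    set x0 : Fin n := ⟨0, by omega⟩ with hx0
    set x1 : Fin n := ⟨1, by omega⟩ with hx1
    set y0 : Fin m := ⟨0, by omega⟩ with hy0
    set y1 : Fin m := ⟨1, by omega⟩ with hy1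
    have hx01 : x0 ≠ x1 := by simp [hx0, hx1, Fin.ext_iff]
    have hy01 : y0 ≠ y1 := by simp [hy0, hy1, Fin.ext_iff]
    set a := W (x0, y0) (x0, y0)
    set b := W (x0, y0) (x0, y1)
    set c := W (x0, y0) (x1, y0)
    set d := W (x0, y0) (x1, y1)
    have key : W = (a - b - c + d) •
          ((1 : Matrix (Fin n) (Fin n) ℝ) ⊗ₖ (1 : Matrix (Fin m) (Fin m) ℝ)) +
        (b - d) • ((1 : Matrix (Fin n) (Fin n) ℝ) ⊗ₖ allOnes m) +
        (c - d) • (allOnes n ⊗ₖ (1 : Matrix (Fin m) (Fin m) ℝ)) +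
        d • (allOnes n ⊗ₖ allOnes m) := by
      ext ⟨i, j⟩ ⟨k, l⟩
      simp only [Matrix.add_apply, Matrix.smul_apply, kroneckerMap_apply,
        Matrix.one_apply, allOnes, Matrix.of_apply, smul_eq_mul]
      by_cases hik : i = k <;> by_cases hjl : j = l
      · subst hik; subst hjl
        have : W (i, j) (i, j) = a := by
          have := inv (Equiv.swap i x0) (Equiv.swap j y0) i j i j
          simpa [a] using this.symm
        rw [this]; simp; ring
      · subst hik
        obtain ⟨τ, hτ1, hτ2⟩ := exists_perm_two hjl hy01
        have : W (i, j) (i, l) = b := by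
          have := inv (Equiv.swap i x0) τ i j i l
          simp only [Equiv.swap_apply_left, hτ1, hτ2] at this
          exact this.symm
        rw [this]; simp [hjl]; try ring
      · subst hjl
        obtain ⟨σ, hσ1, hσ2⟩ := exists_perm_two hik hx01
        have : W (i, j) (k, j) = c := by
          have := inv σ (Equiv.swap j y0) i j k j
          simp only [Equiv.swap_apply_left, hσ1, hσ2] at this
          exact this.symm
        rw [this]; simp [hik]; try ring
      · obtain ⟨σ, hσ1, hσ2⟩ := exists_perm_two hik hx01
        obtain ⟨τ, hτ1, hτ2⟩ := exists_perm_two hjl hy01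
        have : W (i, j) (k, l) = d := by
          have := inv σ τ i j k l
          simp only [hσ1, hσ2, hτ1, hτ2] at this
          exact this.symm
        rw [this]; simp [hik, hjl]
    rw [key]
    have m1 := Submodule.subset_span (R := ℝ)
      (s := {(1 : Matrix (Fin n) (Fin n) ℝ) ⊗ₖ (1 : Matrix (Fin m) (Fin m) ℝ),
         (1 : Matrix (Fin n) (Fin n) ℝ) ⊗ₖ allOnes m,
         allOnes n ⊗ₖ (1 : Matrix (Fin m) (Fin m) ℝ),
         allOnes n ⊗ₖ allOnes m})
    refine Submodule.add_mem _ (Submodule.add_mem _ (Submodule.add_mem _ ?_ ?_) ?_) ?_ <;>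
      exact Submodule.smul_mem _ _ (m1 (by simp))
  · intro hW
    have hle : Submodule.span ℝ
        {(1 : Matrix (Fin n) (Fin n) ℝ) ⊗ₖ (1 : Matrix (Fin m) (Fin m) ℝ),
         (1 : Matrix (Fin n) (Fin n) ℝ) ⊗ₖ allOnes m,
         allOnes n ⊗ₖ (1 : Matrix (Fin m) (Fin m) ℝ),
         allOnes n ⊗ₖ allOnes m} ≤ kronPermCommutant n m := by
      rw [Submodule.span_le]
      obtain ⟨h1, h2, h3, h4⟩ := generators_mem n m
      intro v hv
      simp only [Set.mem_insert_iff, Set.mem_singleton_iff] at hv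
      rcases hv with rfl | rfl | rfl | rfl
      exacts [h1, h2, h3, h4]
    exact hle hW

lemma generators_li {n m : ℕ} (hn : 2 ≤ n) (hm : 2 ≤ m) :
    LinearIndependent ℝ
      ![(1 : Matrix (Fin n) (Fin n) ℝ) ⊗ₖ (1 : Matrix (Fin m) (Fin m) ℝ),
        (1 : Matrix (Fin n) (Fin n) ℝ) ⊗ₖ allOnes m,
        allOnes n ⊗ₖ (1 : Matrix (Fin m) (Fin m) ℝ),
        allOnes n ⊗ₖ allOnes m] := by
  rw [Fintype.linearIndependent_iff]
  intro g hg
  set x0 : Fin n := ⟨0, by omega⟩ with hx0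
  set x1 : Fin n := ⟨1, by omega⟩ with hx1
  set y0 : Fin m := ⟨0, by omega⟩ with hy0
  set y1 : Fin m := ⟨1, by omega⟩ with hy1
  have hx01 : x0 ≠ x1 := by simp [hx0, hx1, Fin.ext_iff]
  have hy01 : y0 ≠ y1 := by simp [hy0, hy1, Fin.ext_iff]
  rw [Fin.sum_univ_four] at hg
  have e1 := congrFun (congrFun hg (x0, y0)) (x0, y0)
  have e2 := congrFun (congrFun hg (x0, y0)) (x0, y1)
  have e3 := congrFun (congrFun hg (x0, y0)) (x1, y0)
  have e4 := congrFun (congrFun hg (x0, y0)) (x1, y1)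
  simp [Matrix.add_apply, Matrix.smul_apply, Matrix.one_apply,
    allOnes, hx01, hy01] at e1 e2 e3 e4
  intro i
  fin_cases i <;> simp <;> linarith

theorem kron_commutant_span_and_dim_four {n m : ℕ} (hn : 2 ≤ n) (hm : 2 ≤ m)
    (W : Matrix (Fin n × Fin m) (Fin n × Fin m) ℝ) :
    ((∀ (σ : Equiv.Perm (Fin n)) (τ : Equiv.Perm (Fin m)),
        W * ((σ.permMatrix ℝ) ⊗ₖ (τ.permMatrix ℝ)) =
          ((σ.permMatrix ℝ) ⊗ₖ (τ.permMatrix ℝ)) * W) ↔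
      W ∈ Submodule.span ℝ
        {(1 : Matrix (Fin n) (Fin n) ℝ) ⊗ₖ (1 : Matrix (Fin m) (Fin m) ℝ),
         (1 : Matrix (Fin n) (Fin n) ℝ) ⊗ₖ allOnes m,
         allOnes n ⊗ₖ (1 : Matrix (Fin m) (Fin m) ℝ),
         allOnes n ⊗ₖ allOnes m}) ∧
    LinearIndependent ℝ
      ![(1 : Matrix (Fin n) (Fin n) ℝ) ⊗ₖ (1 : Matrix (Fin m) (Fin m) ℝ),
        (1 : Matrix (Fin n) (Fin n) ℝ) ⊗ₖ allOnes m,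
        allOnes n ⊗ₖ (1 : Matrix (Fin m) (Fin m) ℝ),
        allOnes n ⊗ₖ allOnes m] ∧
    Module.finrank ℝ (kronPermCommutant n m) = 4 := by
  refine ⟨commutant_iff_span hn hm W, generators_li hn hm, ?_⟩
  have hrange : Set.range
      ![(1 : Matrix (Fin n) (Fin n) ℝ) ⊗ₖ (1 : Matrix (Fin m) (Fin m) ℝ),
        (1 : Matrix (Fin n) (Fin n) ℝ) ⊗ₖ allOnes m,
        allOnes n ⊗ₖ (1 : Matrix (Fin m) (Fin m) ℝ),
        allOnes n ⊗ₖ allOnes m] =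
      {(1 : Matrix (Fin n) (Fin n) ℝ) ⊗ₖ (1 : Matrix (Fin m) (Fin m) ℝ),
         (1 : Matrix (Fin n) (Fin n) ℝ) ⊗ₖ allOnes m,
         allOnes n ⊗ₖ (1 : Matrix (Fin m) (Fin m) ℝ),
         allOnes n ⊗ₖ allOnes m} := by
    ext V
    simp only [Matrix.range_cons, Matrix.range_empty, Set.union_empty, Set.mem_union,
      Set.mem_singleton_iff, Set.mem_insert_iff]
  have heq : kronPermCommutant n m = Submodule.span ℝ
      (Set.range
      ![(1 : Matrix (Fin n) (Fin n) ℝ) ⊗ₖ (1 : Matrix (Fin m) (Fin m) ℝ),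
        (1 : Matrix (Fin n) (Fin n) ℝ) ⊗ₖ allOnes m,
        allOnes n ⊗ₖ (1 : Matrix (Fin m) (Fin m) ℝ),
        allOnes n ⊗ₖ allOnes m]) := by
    rw [hrange]
    ext V
    exact commutant_iff_span hn hm V
  rw [heq, finrank_span_eq_card (generators_li hn hm)]
  rfl
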